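/- Let ε ∈ ℝ and let J₂ = [[0, −1], [1, 0]] ∈ ℝ^{2×2}. Suppose y : ℝ → ℝ² is differentiable and satisfies y'(t) = ε J₂ tanh(y(t)) for all t ∈ ℝ, where tanh is applied entrywise (equivalently, y₁'(t) = −ε tanh(y₂(t)) and y₂'(t) = ε tanh(y₁(t))). Then y is periodic: there exists P > 0 such that y(t + P) = y(t) for all t ∈ ℝ. -/

import Mathlib

open Real Set


lemma hasDerivAt_tanh' (x : ℝ) : HasDerivAt Real.tanh (1 / Real.cosh x ^ 2) x := by
  have h := (Real.hasDerivAt_sinh x).div (Real.hasDerivAt_cosh x) (Real.cosh_pos x).ne'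
  have e : (Real.cosh x * Real.cosh x - Real.sinh x * Real.sinh x) / Real.cosh x ^ 2
      = 1 / Real.cosh x ^ 2 := by
    rw [show Real.cosh x * Real.cosh x - Real.sinh x * Real.sinh x
        = Real.cosh x ^ 2 - Real.sinh x ^ 2 from by ring, Real.cosh_sq_sub_sinh_sq]
  rw [← e]
  have efun : Real.tanh = fun z => Real.sinh z / Real.cosh z := by
    funext z; exact Real.tanh_eq_sinh_div_cosh z
  rw [efun]; exact h

lemma tanh_lipschitz : LipschitzWith 1 Real.tanh := by
  apply lipschitzWith_of_nnnorm_deriv_le (fun x => (hasDerivAt_tanh' x).differentiableAt)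
  intro x
  rw [(hasDerivAt_tanh' x).deriv]
  have : ‖(1:ℝ) / Real.cosh x ^ 2‖ ≤ 1 := by
    rw [Real.norm_eq_abs, abs_of_nonneg (by positivity), div_le_one (by positivity)]
    nlinarith [Real.one_le_cosh x]
  exact_mod_cast this


lemma hasDerivAt_logcosh (x : ℝ) :
    HasDerivAt (fun x => Real.log (Real.cosh x)) (Real.tanh x) x := by
  have h := (Real.hasDerivAt_cosh x).log (Real.cosh_pos x).ne'
  simpa [Real.tanh_eq_sinh_div_cosh] using h

lemma logcosh_nonneg (x : ℝ) : 0 ≤ Real.log (Real.cosh x) :=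
  Real.log_nonneg (Real.one_le_cosh x)

lemma logcosh_pos {x : ℝ} (hx : x ≠ 0) : 0 < Real.log (Real.cosh x) :=
  Real.log_pos (Real.one_lt_cosh.mpr hx)

lemma abs_le_logcosh (x : ℝ) : |x| ≤ Real.log (Real.cosh x) + Real.log 2 := by
  have h : Real.exp |x| / 2 ≤ Real.cosh x := by
    rw [Real.cosh_eq]
    rcases abs_cases x with ⟨h1, _⟩ | ⟨h1, _⟩ <;> rw [h1] <;>
      [skip; rw [Real.exp_neg x] ] <;> nlinarith [Real.exp_pos x, Real.exp_pos (-x),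
        Real.exp_neg x]
  have := Real.log_le_log (by positivity) h
  rw [Real.log_div (Real.exp_ne_zero _) two_ne_zero, Real.log_exp] at this
  linarith

lemma logcosh_le (x : ℝ) : Real.log (Real.cosh x) ≤ x * Real.tanh x := by
  have key : ∀ z : ℝ, 0 ≤ z → Real.log (Real.cosh z) ≤ z * Real.tanh z := by
    intro z hz
    set φ : ℝ → ℝ := fun x => x * Real.tanh x - Real.log (Real.cosh x) with hφ
    have hd : ∀ x : ℝ, HasDerivAt φ (x * (1 / Real.cosh x ^ 2)) x := by
      intro x
      have := ((hasDerivAt_id x).mul (hasDerivAt_tanh' x)).sub (hasDerivAt_logcosh x)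
      refine this.congr_deriv ?_
      rw [Real.tanh_eq_sinh_div_cosh]
      field_simp
      nlinarith [Real.cosh_sq_sub_sinh_sq x, Real.cosh_pos x, show id x = x from rfl]
    have mono : MonotoneOn φ (Ici 0) := by
      apply monotoneOn_of_deriv_nonneg (convex_Ici 0)
        (Continuous.continuousOn
          (Differentiable.continuous (fun x => (hd x).differentiableAt)))
      · intro x hx
        exact (hd x).differentiableAt.differentiableWithinAt
      · intro x hx
        rw [interior_Ici] at hx
        rw [(hd x).deriv]
        have hx' : (0:ℝ) < x := hx
        positivity
    have := mono (self_mem_Ici) (mem_Ici.mpr hz) hz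
    simp only [hφ, Real.tanh_zero, Real.cosh_zero, Real.log_one, mul_zero, sub_zero,
      zero_mul, sub_nonneg] at this
    linarith [this]
  rcases le_or_gt 0 x with h | h
  · exact key x h
  · have := key (-x) (by linarith)
    rwa [Real.cosh_neg, Real.tanh_neg, mul_neg, neg_mul, neg_neg] at this


noncomputable def vf (ε : ℝ) (v : ℝ × ℝ) : ℝ × ℝ := (-(ε * Real.tanh v.2), ε * Real.tanh v.1)

lemma vf_lipschitz (ε : ℝ) : LipschitzWith (‖ε‖₊) (vf ε) := by
  have l1 : LipschitzWith (‖(-ε)‖₊ * (1 * 1)) (fun v : ℝ × ℝ => -ε * Real.tanh v.2) :=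
    (lipschitzWith_smul (-ε)).comp ((tanh_lipschitz).comp LipschitzWith.prod_snd)
  have l2 : LipschitzWith (‖ε‖₊ * (1 * 1)) (fun v : ℝ × ℝ => ε * Real.tanh v.1) :=
    (lipschitzWith_smul ε).comp ((tanh_lipschitz).comp LipschitzWith.prod_fst)
  have := l1.prodMk l2
  simp [nnnorm_neg, vf, neg_mul] at this
  exact this

lemma uniq {ε : ℝ} {f g : ℝ → ℝ × ℝ}
    (hf : ∀ t, HasDerivAt f (vf ε (f t)) t) (hg : ∀ t, HasDerivAt g (vf ε (g t)) t)
    (h0 : f 0 = g 0) : ∀ t, f t = g t := by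
  intro t
  have hmem : t ∈ Ioo (-(|t|+1)) (|t|+1) := by
    constructor <;> cases abs_cases t <;> linarith
  refine ODE_solution_unique_of_mem_Ioo (v := fun _ => vf ε) (s := fun _ => univ)
    (K := ‖ε‖₊) (fun _ _ => (vf_lipschitz ε).lipschitzOnWith)
    (t₀ := 0) ?_ (fun s _ => ⟨hf s, trivial⟩) (fun s _ => ⟨hg s, trivial⟩) h0 hmem
  constructor <;> cases abs_cases t <;> linarith


noncomputable def Ham (v : ℝ × ℝ) : ℝ := Real.log (Real.cosh v.1) + Real.log (Real.cosh v.2)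

theorem stmt6_main (ε : ℝ) (hε : 0 < ε) (y : ℝ → ℝ × ℝ)
    (h1 : ∀ t : ℝ, HasDerivAt (fun s => (y s).1) (-ε * Real.tanh (y t).2) t)
    (h2 : ∀ t : ℝ, HasDerivAt (fun s => (y s).2) (ε * Real.tanh (y t).1) t) :
    ∃ P > (0 : ℝ), ∀ t : ℝ, y (t + P) = y t := by
  -- full solution derivative
  have hy : ∀ t, HasDerivAt y (vf ε (y t)) t := by
    intro t
    have := (h1 t).prodMk (h2 t)
    simp only [neg_mul] at this
    exact this
  by_cases hy0 : y 0 = ((0:ℝ), (0:ℝ))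
  · -- constant zero solution
    have hzero : ∀ t, HasDerivAt (fun _ : ℝ => ((0:ℝ),(0:ℝ))) (vf ε ((0:ℝ),(0:ℝ))) t := by
      intro t
      exact (hasDerivAt_const t ((0:ℝ),(0:ℝ))).congr_deriv (Prod.ext (by simp [vf]) (by simp [vf]))
    have := uniq hy (fun t => hzero t) (by rw [hy0])
    exact ⟨1, one_pos, fun t => by rw [this (t+1), this t]⟩
  -- conservation of Ham
  have hH : ∀ t, HasDerivAt (fun t => Ham (y t)) 0 t := by
    intro t
    have hA := (hasDerivAt_logcosh ((y t).1)).comp t (h1 t)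
    have hB := (hasDerivAt_logcosh ((y t).2)).comp t (h2 t)
    have h3 : HasDerivAt (fun s => Ham (y s))
        (Real.tanh (y t).1 * (-ε * Real.tanh (y t).2)
          + Real.tanh (y t).2 * (ε * Real.tanh (y t).1)) t := hA.add hB
    convert h3 using 1
    ring
  have hcons : ∀ t, Ham (y t) = Ham (y 0) :=
    fun t => is_const_of_deriv_eq_zero (fun s => (hH s).differentiableAt)
      (fun s => (hH s).deriv) t 0
  set c := Ham (y 0) with hc
  have hcpos : 0 < c := by
    have hne : (y 0).1 ≠ 0 ∨ (y 0).2 ≠ 0 := by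
      by_contra h
      push_neg at h
      exact hy0 (Prod.ext h.1 h.2)
    rcases hne with h | h
    · have := logcosh_pos h
      have := logcosh_nonneg ((y 0).2)
      simp only [hc, Ham]; linarith
    · have := logcosh_pos h
      have := logcosh_nonneg ((y 0).1)
      simp only [hc, Ham]; linarith
  -- bounds along the trajectory
  set B := c + Real.log 2 with hBdef
  have hlog2 : 0 < Real.log 2 := Real.log_pos one_lt_two
  have hBpos : 0 < B := by positivity
  have hb1 : ∀ t, |(y t).1| ≤ B := by
    intro t
    have h := hcons t
    simp only [Ham] at h
    have := abs_le_logcosh ((y t).1)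
    have := logcosh_nonneg ((y t).2)
    rw [hBdef]; linarith
  have hb2 : ∀ t, |(y t).2| ≤ B := by
    intro t
    have h := hcons t
    simp only [Ham] at h
    have := abs_le_logcosh ((y t).2)
    have := logcosh_nonneg ((y t).1)
    rw [hBdef]; linarith
  have hρ_ub : ∀ t, (y t).1^2 + (y t).2^2 ≤ 2*B^2 := by
    intro t
    have a1 := hb1 t; have a2 := hb2 t
    have s1 : (y t).1^2 ≤ B^2 := by nlinarith [abs_nonneg ((y t).1), sq_abs ((y t).1)]
    have s2 : (y t).2^2 ≤ B^2 := by nlinarith [abs_nonneg ((y t).2), sq_abs ((y t).2)]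
    linarith
  have hyne : ∀ t, ¬((y t).1 = 0 ∧ (y t).2 = 0) := by
    intro t h
    have := hcons t
    simp only [Ham, h.1, h.2, Real.cosh_zero, Real.log_one, add_zero] at this
    linarith
  have hρ_pos : ∀ t, 0 < (y t).1^2 + (y t).2^2 := by
    intro t
    rcases not_and_or.mp (hyne t) with h | h <;> positivity
  have hg_lb : ∀ t, c ≤ (y t).1 * Real.tanh (y t).1 + (y t).2 * Real.tanh (y t).2 := by
    intro t
    have h := hcons t
    simp only [Ham] at h
    linarith [logcosh_le ((y t).1), logcosh_le ((y t).2)]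
  -- complex formulation
  set z : ℝ → ℂ := fun t => ((y t).1 : ℂ) + ((y t).2 : ℂ) * Complex.I with hzdef
  set z' : ℝ → ℂ := fun t =>
    ((-ε * Real.tanh (y t).2 : ℝ) : ℂ) + ((ε * Real.tanh (y t).1 : ℝ) : ℂ) * Complex.I with hz'def
  have hz : ∀ t, HasDerivAt z (z' t) t := fun t =>
    ((h1 t).ofReal_comp).add ((h2 t).ofReal_comp.mul_const Complex.I)
  have hzne : ∀ t, z t ≠ 0 := by
    intro t h
    apply hyne t
    have hre := congrArg Complex.re h
    have him := congrArg Complex.im h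
    simp [hzdef] at hre him
    exact ⟨hre, him⟩
  have hycont : Continuous y := by
    have : Differentiable ℝ y := fun t => (hy t).differentiableAt
    exact this.continuous
  have htanh_cont : Continuous Real.tanh :=
    Differentiable.continuous (fun x => (hasDerivAt_tanh' x).differentiableAt)
  have hzcont : Continuous z := by
    have : Differentiable ℝ z := fun t => (hz t).differentiableAt
    exact this.continuous
  have hz'cont : Continuous z' := by
    rw [hz'def]
    exact (Complex.continuous_ofReal.comp
        (continuous_const.mul (htanh_cont.comp hycont.snd))).add
      ((Complex.continuous_ofReal.comp
        (continuous_const.mul (htanh_cont.comp hycont.fst))).mul continuous_const)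
  set q : ℝ → ℂ := fun t => z' t / z t with hqdef
  have hqcont : Continuous q := hz'cont.div hzcont hzne
  set F : ℝ → ℂ := fun t => ∫ s in (0:ℝ)..t, q s with hFdef
  have hF : ∀ t, HasDerivAt F (q t) t := by
    intro t
    exact intervalIntegral.integral_hasDerivAt_right
      (hqcont.intervalIntegrable 0 t)
      hqcont.aestronglyMeasurable.stronglyMeasurableAtFilter
      hqcont.continuousAt
  have hF0 : F 0 = 0 := by simp [hFdef]
  have hrep : ∀ t, z t = z 0 * Complex.exp (F t) := by
    have hG : ∀ t, HasDerivAt (fun t => z t * Complex.exp (-F t)) 0 t := by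
      intro t
      have := (hz t).mul ((hF t).neg.cexp)
      refine this.congr_deriv ?_
      rw [hqdef]
      field_simp [hzne t]
      ring
    have hGconst : ∀ t, z t * Complex.exp (-F t) = z 0 * Complex.exp (-F 0) :=
      fun t => is_const_of_deriv_eq_zero (fun s => (hG s).differentiableAt)
        (fun s => (hG s).deriv) t 0
    intro t
    have := hGconst t
    rw [hF0, neg_zero, Complex.exp_zero, mul_one] at this
    calc z t = z t * Complex.exp (-F t) * Complex.exp (F t) := by
          rw [mul_assoc, ← Complex.exp_add]; simp
      _ = z 0 * Complex.exp (F t) := by rw [this]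
  -- imaginary part of q
  have hu : ∀ t, HasDerivAt (fun t => (F t).im) ((q t).im) t := fun t =>
    (Complex.imCLM.hasFDerivAt.comp_hasDerivAt t (hF t))
  have hqim : ∀ t, (q t).im
      = ε * ((y t).1 * Real.tanh (y t).1 + (y t).2 * Real.tanh (y t).2)
        / ((y t).1^2 + (y t).2^2) := by
    intro t
    have hρ := (hρ_pos t).ne'
    rw [hqdef]
    simp only [Complex.div_im, hzdef, hz'def, Complex.add_re, Complex.add_im,
      Complex.ofReal_re, Complex.ofReal_im, Complex.mul_re, Complex.mul_im,
      Complex.I_re, Complex.I_im, Complex.normSq_apply, mul_zero, mul_one,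
      zero_mul, sub_zero, zero_add, add_zero, zero_sub]
    have hρ2 : (y t).1*(y t).1 + (y t).2*(y t).2 ≠ 0 := by
      have := hρ_pos t; nlinarith
    field_simp [hρ, hρ2]
    ring
  set δ := ε * c / (2*B^2) with hδdef
  have hδpos : 0 < δ := by positivity
  have hqim_lb : ∀ t, δ ≤ (q t).im := by
    intro t
    rw [hqim t, hδdef]
    have hg := hg_lb t
    have hp := hρ_pos t
    have hub := hρ_ub t
    rw [div_le_div_iff₀ (by positivity) hp]
    nlinarith [mul_le_mul_of_nonneg_left hub (mul_pos hε hcpos).le,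
      mul_le_mul_of_nonneg_left hg (mul_pos hε (by positivity : (0:ℝ) < 2*B^2)).le]
  have hmono : ∀ t, 0 ≤ t → δ * t ≤ (F t).im := by
    intro t ht
    have hw : ∀ s : ℝ, HasDerivAt (fun s => (F s).im - δ * s) ((q s).im - δ) s := by
      intro s
      have := (hu s).sub ((hasDerivAt_id s).const_mul δ)
      exact this.congr_deriv (by ring)
    have hmon : Monotone fun s => (F s).im - δ * s :=
      monotone_of_deriv_nonneg (fun s => (hw s).differentiableAt)
        (fun s => by rw [(hw s).deriv]; linarith [hqim_lb s])
    have h0 := hmon ht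
    simp only [hF0, Complex.zero_im, mul_zero, sub_zero, zero_sub] at h0
    linarith [h0]
  -- find the quarter-turn time T
  have hucont : Continuous fun t => (F t).im :=
    Differentiable.continuous (fun t => (hu t).differentiableAt)
  set T1 := (π/2 + 1)/δ with hT1def
  have hπ : (0:ℝ) < π/2 := by positivity
  have hT1pos : 0 < T1 := by positivity
  have hval : π/2 ≤ (F T1).im := by
    have := hmono T1 hT1pos.le
    rw [hT1def] at this ⊢
    rw [mul_div_cancel₀ _ hδpos.ne'] at this
    linarith
  have hmem : π/2 ∈ Icc ((F 0).im) ((F T1).im) := by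
    constructor
    · simp [hF0]; positivity
    · exact hval
  obtain ⟨T, hTmem, hTval⟩ :=
    intermediate_value_Icc hT1pos.le hucont.continuousOn hmem
  have hTpos : 0 < T := by
    rcases eq_or_lt_of_le hTmem.1 with h | h
    · exfalso
      rw [← h] at hTval
      simp [hF0] at hTval
      linarith [hTval, hπ]
    · exact h
  -- z T = i * z 0
  set a := (F T).re with hadef
  have hFT : F T = (a:ℂ) + ((π/2 : ℝ) : ℂ) * Complex.I := by
    have hTval' : (F T).im = π/2 := hTval
    conv_lhs => rw [← Complex.re_add_im (F T)]
    rw [hTval']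
  have hexp : Complex.exp (F T) = ((Real.exp a : ℝ) : ℂ) * Complex.I := by
    rw [hFT, Complex.exp_add, ← Complex.ofReal_exp]
    congr 1
    rw [Complex.exp_mul_I, ← Complex.ofReal_cos, ← Complex.ofReal_sin,
      Real.cos_pi_div_two, Real.sin_pi_div_two]
    simp
  set sc := Real.exp a with hscdef
  have hscpos : 0 < sc := Real.exp_pos a
  clear_value sc
  have hzT := hrep T
  rw [hexp] at hzT
  have hre := congrArg Complex.re hzT
  have him := congrArg Complex.im hzT
  simp only [hzdef, Complex.add_re, Complex.add_im, Complex.ofReal_re, Complex.ofReal_im,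
    Complex.mul_re, Complex.mul_im, Complex.I_re, Complex.I_im, mul_zero, mul_one,
    zero_mul, sub_zero, zero_add, add_zero, zero_sub] at hre him
  -- show sc = 1 using conservation and strict monotonicity of log cosh
  have hkey_le : ∀ u v : ℝ, |u| ≤ |v| → Real.log (Real.cosh u) ≤ Real.log (Real.cosh v) :=
    fun u v h => Real.log_le_log (Real.cosh_pos u) (Real.cosh_le_cosh.mpr h)
  have hkey_lt : ∀ u v : ℝ, |u| < |v| → Real.log (Real.cosh u) < Real.log (Real.cosh v) :=
    fun u v h => Real.log_lt_log (Real.cosh_pos u) (Real.cosh_lt_cosh.mpr h)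
  have hHT : Real.log (Real.cosh ((y 0).2 * sc)) + Real.log (Real.cosh ((y 0).1 * sc)) = c := by
    have := hcons T
    simp only [Ham, hre, him, Real.cosh_neg] at this
    linarith [this]
  have hc0 : Real.log (Real.cosh ((y 0).1)) + Real.log (Real.cosh ((y 0).2)) = c := by
    rw [hc]; rfl
  have habs : ∀ x : ℝ, |x * sc| = |x| * sc := by
    intro x; rw [abs_mul, abs_of_pos hscpos]
  have hsc1 : sc = 1 := by
    rcases lt_trichotomy sc 1 with hlt | heq | hgt
    · exfalso
      have hle1 : ∀ x : ℝ, |x * sc| ≤ |x| := by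
        intro x; rw [habs]; exact mul_le_of_le_one_right (abs_nonneg x) hlt.le
      have hlt1 : ∀ x : ℝ, x ≠ 0 → |x * sc| < |x| := by
        intro x hx; rw [habs]
        exact mul_lt_of_lt_one_right (abs_pos.mpr hx) hlt
      rcases not_and_or.mp (hyne 0) with h | h
      · have l1 := hkey_lt _ _ (hlt1 _ h)
        have l2 := hkey_le ((y 0).2 * sc) ((y 0).2) (hle1 _)
        linarith
      · have l1 := hkey_lt _ _ (hlt1 _ h)
        have l2 := hkey_le ((y 0).1 * sc) ((y 0).1) (hle1 _)
        linarith
    · exact heq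
    · exfalso
      have hle1 : ∀ x : ℝ, |x| ≤ |x * sc| := by
        intro x; rw [habs]; exact le_mul_of_one_le_right (abs_nonneg x) hgt.le
      have hlt1 : ∀ x : ℝ, x ≠ 0 → |x| < |x * sc| := by
        intro x hx; rw [habs]
        exact lt_mul_of_one_lt_right (abs_pos.mpr hx) hgt
      rcases not_and_or.mp (hyne 0) with h | h
      · have l1 := hkey_lt _ _ (hlt1 _ h)
        have l2 := hkey_le ((y 0).2) ((y 0).2 * sc) (hle1 _)
        linarith
      · have l1 := hkey_lt _ _ (hlt1 _ h)
        have l2 := hkey_le ((y 0).1) ((y 0).1 * sc) (hle1 _)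
        linarith
  rw [hsc1, mul_one] at hre him
  -- quarter-turn symmetry via uniqueness
  have hJ : ∀ t, y (t + T) = (-(y t).2, (y t).1) := by
    apply uniq (ε := ε) (f := fun t => y (t + T)) (g := fun t => (-(y t).2, (y t).1))
    · intro t
      have := (hy (t + T)).scomp t ((hasDerivAt_id t).add_const T)
      exact this.congr_deriv (by simp)
    · intro t
      have hA := (h2 t).neg
      have hB := h1 t
      have hprod := hA.prodMk hB
      refine hprod.congr_deriv ?_
      simp only [vf, Real.tanh_neg]
      rw [Prod.ext_iff]
      refine ⟨by ring, by ring⟩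
    · simp only [zero_add]
      exact Prod.ext hre him
  refine ⟨T+T+T+T, by positivity, ?_⟩
  intro t
  have e : t + (T+T+T+T) = (((t+T)+T)+T)+T := by ring
  rw [e, hJ (((t+T)+T)+T), hJ ((t+T)+T), hJ (t+T), hJ t]
  simp

/-- solutions of the planar Hamiltonian system
`y₁' = -ε tanh(y₂)`, `y₂' = ε tanh(y₁)` are periodic. -/
theorem stmt_6 (ε : ℝ) (y : ℝ → ℝ × ℝ)
    (h1 : ∀ t : ℝ, HasDerivAt (fun s => (y s).1) (-ε * Real.tanh (y t).2) t)
    (h2 : ∀ t : ℝ, HasDerivAt (fun s => (y s).2) (ε * Real.tanh (y t).1) t) :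
    ∃ P > (0 : ℝ), ∀ t : ℝ, y (t + P) = y t := by
  rcases lt_trichotomy ε 0 with hneg | hzero | hpos
  · -- time reversal reduces to the case of positive ε
    set Y : ℝ → ℝ × ℝ := fun t => y (-t) with hY
    have H1 : ∀ t, HasDerivAt (fun s => (Y s).1) (-(-ε) * Real.tanh (Y t).2) t := by
      intro t
      have := (h1 (-t)).comp t (hasDerivAt_neg t)
      refine this.congr_deriv ?_
      simp only [hY]
      ring
    have H2 : ∀ t, HasDerivAt (fun s => (Y s).2) ((-ε) * Real.tanh (Y t).1) t := by
      intro t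
      have := (h2 (-t)).comp t (hasDerivAt_neg t)
      refine this.congr_deriv ?_
      simp only [hY]
      ring
    obtain ⟨P, hP, hper⟩ := stmt6_main (-ε) (by linarith) Y H1 H2
    refine ⟨P, hP, fun t => ?_⟩
    have h := hper (-(t + P))
    have e1 : (-(t + P) + P) = -t := by ring
    rw [e1] at h
    simpa [hY] using h.symm
  · subst hzero
    have k1 : ∀ t, (y t).1 = (y 0).1 := fun t => is_const_of_deriv_eq_zero
      (fun s => (h1 s).differentiableAt) (fun s => by rw [(h1 s).deriv]; ring) t 0
    have k2 : ∀ t, (y t).2 = (y 0).2 := fun t => is_const_of_deriv_eq_zero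
      (fun s => (h2 s).differentiableAt) (fun s => by rw [(h2 s).deriv]; ring) t 0
    exact ⟨1, one_pos, fun t => Prod.ext (by rw [k1 (t+1), k1 t]) (by rw [k2 (t+1), k2 t])⟩
  · exact stmt6_main ε hpos y h1 h2
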